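/- arXiv:2004.12942 — 2 statements merged into one kernel-verified Lean document; each statement's English description precedes it below -/
import Mathlib

section
/- Let m ≥ 1, n = 2m, and let f be a Maiorana–McFarland bent function on n variables, i.e. f(x, y) = (XOR over those i with φ(x) i = true of y i) XOR h(x) with φ bijective. Then every multilinear real polynomial representing f has total degree exactly n: there exists a polynomial p in MvPolynomial (Fin n) ℝ that has degree at most 1 in each variable and satisfies p(x) = f(x) for every Boolean input x (identifying false ↦ 0, true ↦ 1), and every such polynomial has total degree n. -/
/-- XOR over those coordinates `i` with `a i = true` of `y i`, expressed as the
parity of the number of coordinates where both `a` and `y` are true. -/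
def parityDot {m : ℕ} (a y : Fin m → Bool) : Bool :=
  decide (Odd ((Finset.univ.filter (fun i : Fin m => a i = true ∧ y i = true)).card))

/-- The Maiorana–McFarland function `f(x, y) = φ(x)·y XOR h(x)` on `m + m`
variables, where the first `m` coordinates form `x` and the last `m` form `y`. -/
def MMBent {m : ℕ} (φ : (Fin m → Bool) → (Fin m → Bool))
    (h : (Fin m → Bool) → Bool) (z : Fin (m + m) → Bool) : Bool :=
  xor (parityDot (φ (fun i => z (Fin.castAdd m i))) (fun i => z (Fin.natAdd m i)))
      (h (fun i => z (Fin.castAdd m i)))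

open MvPolynomial Finset

namespace Stmt16Aux

def sgn {n : ℕ} (x : Fin n → Bool) : ℝ := ∏ i, if x i then (1:ℝ) else -1

def chi (b : Bool) : ℝ := if b then -1 else 1

def indR {n : ℕ} (x : Fin n → Bool) : Fin n → ℝ := fun i => if x i then (1:ℝ) else 0

noncomputable def allOnes (n : ℕ) : Fin n →₀ ℕ := Finsupp.equivFunOnFinite.symm fun _ => 1

@[simp] lemma allOnes_apply {n : ℕ} (i : Fin n) : allOnes n i = 1 := rfl

noncomputable def mlin {n : ℕ} (f : (Fin n → Bool) → Bool) : MvPolynomial (Fin n) ℝ :=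
  ∑ x : Fin n → Bool, C (if f x then (1:ℝ) else 0) *
    ∏ i, (C (if x i then (0:ℝ) else 1) + C (if x i then (1:ℝ) else -1) * X i)

lemma mlin_degreeOf {n : ℕ} (f : (Fin n → Bool) → Bool) (i : Fin n) :
    (mlin f).degreeOf i ≤ 1 := by
  refine le_trans (degreeOf_sum_le _ _ _) (Finset.sup_le fun x _ => ?_)
  refine le_trans (degreeOf_mul_le _ _ _) ?_
  rw [degreeOf_C, zero_add]
  refine le_trans (degreeOf_prod_le _ _ _) ?_
  have hfac : ∀ j : Fin n,
      degreeOf i (C (if x j then (0:ℝ) else 1) + C (if x j then (1:ℝ) else -1) * X j)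
        ≤ if i = j then 1 else 0 := by
    intro j
    refine le_trans (degreeOf_add_le _ _ _)
      (max_le (by rw [degreeOf_C]; exact Nat.zero_le _) ?_)
    refine le_trans (degreeOf_mul_le _ _ _) ?_
    rw [degreeOf_C, degreeOf_X, zero_add]
  calc ∑ j, degreeOf i (C (if x j then (0:ℝ) else 1) + C (if x j then (1:ℝ) else -1) * X j)
      ≤ ∑ j, if i = j then 1 else 0 := Finset.sum_le_sum fun j _ => hfac j
    _ = 1 := by simp

lemma mlin_eval {n : ℕ} (f : (Fin n → Bool) → Bool) (x : Fin n → Bool) :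
    eval (indR x) (mlin f) = if f x then 1 else 0 := by
  rw [mlin, map_sum]
  have hterm : ∀ y : Fin n → Bool,
      eval (indR x) (C (if f y then (1:ℝ) else 0) *
        ∏ i, (C (if y i then (0:ℝ) else 1) + C (if y i then (1:ℝ) else -1) * X i))
      = (if f y then (1:ℝ) else 0) * (if y = x then 1 else 0) := by
    intro y
    rw [map_mul, eval_C, map_prod]
    congr 1
    by_cases hyx : y = x
    · subst hyx
      rw [if_pos rfl]
      refine Finset.prod_eq_one fun i _ => ?_
      simp only [map_add, map_mul, eval_C, eval_X, indR]
      cases hyi : y i <;> simp [hyi]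
    · rw [if_neg hyx]
      obtain ⟨i, hi⟩ : ∃ i, y i ≠ x i := by
        by_contra hc
        push_neg at hc
        exact hyx (funext hc)
      refine Finset.prod_eq_zero (Finset.mem_univ i) ?_
      simp only [map_add, map_mul, eval_C, eval_X, indR]
      cases hyi : y i <;> cases hxi : x i <;> simp_all
  rw [Finset.sum_congr rfl fun y _ => hterm y]
  rw [Finset.sum_eq_single x (fun y _ hy => by simp [hy]) (fun hx => absurd (Finset.mem_univ x) hx)]
  simp

lemma key_coeff {n : ℕ} (p : MvPolynomial (Fin n) ℝ) (hp : ∀ i, p.degreeOf i ≤ 1) :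
    ∑ x : Fin n → Bool, sgn x * eval (indR x) p = p.coeff (allOnes n) := by
  have h1 : ∀ x : Fin n → Bool,
      sgn x * eval (indR x) p
        = ∑ d ∈ p.support, p.coeff d *
            ∏ i, ((if x i then (1:ℝ) else -1) * (if x i then (1:ℝ) else 0) ^ d i) := by
    intro x
    rw [eval_eq', Finset.mul_sum]
    refine Finset.sum_congr rfl fun d _ => ?_
    rw [Finset.prod_mul_distrib]
    unfold sgn indR; ring
  rw [Finset.sum_congr rfl fun x _ => h1 x, Finset.sum_comm]
  have h2 : ∀ d ∈ p.support,
      (∑ x : Fin n → Bool, p.coeff d *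
          ∏ i, ((if x i then (1:ℝ) else -1) * (if x i then (1:ℝ) else 0) ^ d i))
        = p.coeff d * (if d = allOnes n then 1 else 0) := by
    intro d hd
    rw [← Finset.mul_sum]
    congr 1
    rw [show (Finset.univ : Finset (Fin n → Bool)) = Fintype.piFinset fun _ => (univ : Finset Bool)
        from (Fintype.piFinset_univ).symm]
    rw [Finset.sum_prod_piFinset (univ : Finset Bool)
      (fun i t => (if t then (1:ℝ) else -1) * (if t then (1:ℝ) else 0) ^ d i)]
    have hin : ∀ i : Fin n,
        (∑ t : Bool, (if t then (1:ℝ) else -1) * (if t then (1:ℝ) else 0) ^ d i)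
          = if d i = 0 then 0 else 1 := by
      intro i
      rw [Fintype.sum_bool]
      by_cases hdi : d i = 0 <;> simp [hdi, zero_pow]
    rw [Finset.prod_congr rfl fun i _ => hin i]
    by_cases hda : d = allOnes n
    · subst hda
      simp
    · rw [if_neg hda]
      obtain ⟨i, hi⟩ : ∃ i, d i ≠ 1 := by
        by_contra hc
        push_neg at hc
        exact hda (Finsupp.ext fun i => by simp [hc i])
      have hle : d i ≤ 1 := le_trans (monomial_le_degreeOf i hd) (hp i)
      have h0 : d i = 0 := by omega
      exact Finset.prod_eq_zero (Finset.mem_univ i) (by simp [h0])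
  rw [Finset.sum_congr rfl h2]
  rw [Finset.sum_eq_single (allOnes n) (fun d _ hdne => by simp [hdne])
    (fun hno => by simp [MvPolynomial.notMem_support_iff.mp hno])]
  simp

lemma chi_xor (u v : Bool) : chi (xor u v) = chi u * chi v := by
  cases u <;> cases v <;> simp [chi]

lemma chi_parityDot {m : ℕ} (c b : Fin m → Bool) :
    chi (parityDot c b) = ∏ i, if c i = true ∧ b i = true then (-1:ℝ) else 1 := by
  rw [Finset.prod_ite, Finset.prod_const, Finset.prod_const, one_pow, mul_one]
  unfold chi parityDot
  rcases Nat.even_or_odd ((Finset.univ.filter (fun i : Fin m => c i = true ∧ b i = true)).card)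
    with he | ho
  · rw [he.neg_one_pow]; simp [Nat.not_odd_iff_even.mpr he]
  · rw [ho.neg_one_pow]; simp [ho]

lemma inner_sum {m : ℕ} (c : Fin m → Bool) :
    ∑ b : Fin m → Bool, sgn b * chi (parityDot c b)
      = ∏ i, if c i = true then (-2:ℝ) else 0 := by
  have h1 : ∀ b : Fin m → Bool, sgn b * chi (parityDot c b)
      = ∏ i, ((if b i then (1:ℝ) else -1) * (if c i = true ∧ b i = true then (-1:ℝ) else 1)) := by
    intro b; rw [chi_parityDot, sgn, ← Finset.prod_mul_distrib]
  rw [Finset.sum_congr rfl fun b _ => h1 b]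
  rw [show (Finset.univ : Finset (Fin m → Bool)) = Fintype.piFinset fun _ => (univ : Finset Bool)
      from (Fintype.piFinset_univ).symm]
  rw [Finset.sum_prod_piFinset (univ : Finset Bool)
    (fun i t => (if t then (1:ℝ) else -1) * (if c i = true ∧ t = true then (-1:ℝ) else 1))]
  refine Finset.prod_congr rfl fun i _ => ?_
  rw [Fintype.sum_bool]
  cases hci : c i <;> norm_num

lemma sgn_ne_zero {n : ℕ} (x : Fin n → Bool) : sgn x ≠ 0 := by
  unfold sgn
  rw [Finset.prod_ne_zero_iff]
  intro i _
  cases x i <;> norm_num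

lemma chi_ne_zero (b : Bool) : chi b ≠ 0 := by cases b <;> simp [chi]

/-- the pair equivalence -/
def pairEquiv (m : ℕ) : ((Fin m → Bool) × (Fin m → Bool)) ≃ (Fin (m + m) → Bool) :=
  (Equiv.sumArrowEquivProdArrow (Fin m) (Fin m) Bool).symm.trans
    (Equiv.arrowCongr finSumFinEquiv (Equiv.refl Bool))

lemma pairEquiv_castAdd {m : ℕ} (a b : Fin m → Bool) (i : Fin m) :
    pairEquiv m (a, b) (Fin.castAdd m i) = a i := by
  show Sum.elim a b (finSumFinEquiv.symm (Fin.castAdd m i)) = a i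
  rw [finSumFinEquiv_symm_apply_castAdd]
  rfl

lemma pairEquiv_natAdd {m : ℕ} (a b : Fin m → Bool) (i : Fin m) :
    pairEquiv m (a, b) (Fin.natAdd m i) = b i := by
  show Sum.elim a b (finSumFinEquiv.symm (Fin.natAdd m i)) = b i
  rw [finSumFinEquiv_symm_apply_natAdd]
  rfl

lemma sgn_pairEquiv {m : ℕ} (a b : Fin m → Bool) :
    sgn (pairEquiv m (a, b)) = sgn a * sgn b := by
  unfold sgn
  rw [Fin.prod_univ_add (f := fun i : Fin (m + m) => if pairEquiv m (a, b) i then (1:ℝ) else -1)]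
  congr 1
  · exact Finset.prod_congr rfl fun i _ => by rw [pairEquiv_castAdd]
  · exact Finset.prod_congr rfl fun i _ => by rw [pairEquiv_natAdd]

lemma MMBent_pairEquiv {m : ℕ} (φ : (Fin m → Bool) → (Fin m → Bool))
    (h : (Fin m → Bool) → Bool) (a b : Fin m → Bool) :
    MMBent φ h (pairEquiv m (a, b)) = xor (parityDot (φ a) b) (h a) := by
  unfold MMBent
  have ha : (fun i => pairEquiv m (a, b) (Fin.castAdd m i)) = a :=
    funext fun i => pairEquiv_castAdd a b i
  have hb : (fun i => pairEquiv m (a, b) (Fin.natAdd m i)) = b :=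
    funext fun i => pairEquiv_natAdd a b i
  rw [ha, hb]

lemma value_ne {m : ℕ} (hm : 1 ≤ m) (φ : (Fin m → Bool) → (Fin m → Bool))
    (hφ : Function.Bijective φ) (h : (Fin m → Bool) → Bool) :
    ∑ z : Fin (m + m) → Bool, sgn z * (if MMBent φ h z then (1:ℝ) else 0) ≠ 0 := by
  have hrw : ∀ z : Fin (m + m) → Bool,
      sgn z * (if MMBent φ h z then (1:ℝ) else 0)
        = sgn z / 2 - sgn z * chi (MMBent φ h z) / 2 := by
    intro z; cases hM : MMBent φ h z <;> simp [chi, hM] <;> ring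
  rw [Finset.sum_congr rfl fun z _ => hrw z, Finset.sum_sub_distrib, ← Finset.sum_div,
    ← Finset.sum_div]
  have hA : ∑ z : Fin (m + m) → Bool, sgn z = 0 := by
    unfold sgn
    rw [show (Finset.univ : Finset (Fin (m+m) → Bool))
          = Fintype.piFinset fun _ => (univ : Finset Bool)
        from (Fintype.piFinset_univ).symm]
    rw [Finset.sum_prod_piFinset (univ : Finset Bool)
      (fun _ t => if t then (1:ℝ) else -1)]
    refine Finset.prod_eq_zero (Finset.mem_univ (⟨0, by omega⟩ : Fin (m + m))) ?_
    rw [Fintype.sum_bool]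
    norm_num
  rw [hA]
  -- the Fourier sum B
  set a0 : Fin m → Bool := (Equiv.ofBijective φ hφ).symm (fun _ => true) with ha0
  have hφa0 : φ a0 = fun _ => true := (Equiv.ofBijective φ hφ).apply_symm_apply _
  have hB : ∑ z : Fin (m + m) → Bool, sgn z * chi (MMBent φ h z)
      = sgn a0 * chi (h a0) * (-2:ℝ)^m := by
    rw [← Fintype.sum_equiv (pairEquiv m)
      (fun ab => sgn (pairEquiv m ab) * chi (MMBent φ h (pairEquiv m ab)))
      (fun z => sgn z * chi (MMBent φ h z)) (fun ab => rfl)]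
    rw [Fintype.sum_prod_type]
    have hab : ∀ a b : Fin m → Bool,
        sgn (pairEquiv m (a, b)) * chi (MMBent φ h (pairEquiv m (a, b)))
          = (sgn a * chi (h a)) * (sgn b * chi (parityDot (φ a) b)) := by
      intro a b
      rw [sgn_pairEquiv, MMBent_pairEquiv, chi_xor]
      ring
    rw [Finset.sum_congr rfl fun a _ => Finset.sum_congr rfl fun b _ => hab a b]
    have hinner : ∀ a : Fin m → Bool,
        ∑ b : Fin m → Bool, (sgn a * chi (h a)) * (sgn b * chi (parityDot (φ a) b))
          = (sgn a * chi (h a)) * ∏ i, if φ a i = true then (-2:ℝ) else 0 := by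
      intro a
      rw [← Finset.mul_sum, inner_sum]
    rw [Finset.sum_congr rfl fun a _ => hinner a]
    rw [Finset.sum_eq_single a0]
    · rw [hφa0]
      simp
    · intro a _ hane
      have : ∃ i, φ a i ≠ true := by
        by_contra hc
        push_neg at hc
        exact hane (hφ.1 (by rw [hφa0]; exact funext hc))
      obtain ⟨i, hi⟩ := this
      rw [Finset.prod_eq_zero (Finset.mem_univ i) (by simp [hi]), mul_zero]
    · intro hno
      exact absurd (Finset.mem_univ a0) hno
  rw [hB, zero_div, zero_sub, neg_ne_zero]
  exact div_ne_zero
    (mul_ne_zero (mul_ne_zero (sgn_ne_zero a0) (chi_ne_zero _)) (pow_ne_zero _ (by norm_num)))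
    (by norm_num)

end Stmt16Aux

open Stmt16Aux in
/-- for `m ≥ 1` and a Maiorana–McFarland bent function `f` on
`n = m + m` variables, there is a multilinear real polynomial representing `f`
on Boolean inputs, and every such polynomial has total degree exactly `n`. -/
theorem stmt16 (m : ℕ) (hm : 1 ≤ m)
    (φ : (Fin m → Bool) → (Fin m → Bool)) (hφ : Function.Bijective φ)
    (h : (Fin m → Bool) → Bool) :
    (∃ p : MvPolynomial (Fin (m + m)) ℝ,
      (∀ i, p.degreeOf i ≤ 1) ∧
      (∀ x : Fin (m + m) → Bool,
        MvPolynomial.eval (fun i => if x i then (1 : ℝ) else 0) p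
          = if MMBent φ h x then 1 else 0)) ∧
    (∀ p : MvPolynomial (Fin (m + m)) ℝ,
      (∀ i, p.degreeOf i ≤ 1) →
      (∀ x : Fin (m + m) → Bool,
        MvPolynomial.eval (fun i => if x i then (1 : ℝ) else 0) p
          = if MMBent φ h x then 1 else 0) →
      p.totalDegree = m + m) := by
  constructor
  · exact ⟨mlin (MMBent φ h), mlin_degreeOf _, fun x => mlin_eval (MMBent φ h) x⟩
  · intro p hdeg heval
    have hco : p.coeff (allOnes (m + m)) ≠ 0 := by
      rw [← key_coeff p hdeg]
      have : ∑ x : Fin (m + m) → Bool, sgn x * MvPolynomial.eval (indR x) p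
          = ∑ x : Fin (m + m) → Bool, sgn x * (if MMBent φ h x then (1:ℝ) else 0) :=
        Finset.sum_congr rfl fun x _ => by unfold indR; rw [heval x]
      rw [this]
      exact value_ne hm φ hφ h
    have hmem : allOnes (m + m) ∈ p.support := MvPolynomial.mem_support_iff.mpr hco
    apply le_antisymm
    · rw [MvPolynomial.totalDegree]
      apply Finset.sup_le
      intro d hd
      rw [Finsupp.sum_fintype _ _ (fun _ => rfl)]
      calc ∑ i, d i ≤ ∑ _i : Fin (m + m), 1 :=
            Finset.sum_le_sum fun i _ => le_trans (MvPolynomial.monomial_le_degreeOf i hd) (hdeg i)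
        _ = m + m := by simp
    · calc m + m = (allOnes (m + m)).sum fun _ e => e := by
            rw [Finsupp.sum_fintype _ _ (fun _ => rfl)]; simp
        _ ≤ p.totalDegree := MvPolynomial.le_totalDegree hmem
end

section
/- Let k ≥ 2 and let f be a Boolean function on n = 2^k − 1 variables, all of whose variables are influencing. Then f is not computed by any parity decision tree of depth k − 1. (Consequently there is no Boolean function with 2^k − 1 influencing variables that is completely described by a parity decision tree of depth less than k.) -/
/-- A deterministic decision tree over `n` Boolean variables: either a leaf
labelled by a `Bool`, or an internal node querying a variable with two subtrees. -/
inductive DTree (n : ℕ) where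
  | leaf : Bool → DTree n
  | node : Fin n → DTree n → DTree n → DTree n

namespace DTree

/-- Evaluation of a decision tree on an input. -/
def eval {n : ℕ} : DTree n → (Fin n → Bool) → Bool
  | leaf b, _ => b
  | node i t0 t1, x => if x i then eval t1 x else eval t0 x

/-- The depth of a decision tree: the maximum number of internal nodes on a
root-to-leaf path. -/
def depth {n : ℕ} : DTree n → ℕ
  | leaf _ => 0
  | node _ t0 t1 => max (depth t0) (depth t1) + 1

/-- A decision tree computes `f` if its evaluation agrees with `f` on all inputs. -/
def Computes {n : ℕ} (T : DTree n) (f : (Fin n → Bool) → Bool) : Prop :=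
  ∀ x, T.eval x = f x

end DTree

/-- Variable `i` is influencing for `f`: there are inputs differing only in
coordinate `i` on which `f` takes different values. -/
def Influences {n : ℕ} (f : (Fin n → Bool) → Bool) (i : Fin n) : Prop :=
  ∃ x x' : Fin n → Bool, (∀ j, j ≠ i → x j = x' j) ∧ f x ≠ f x'

/-- A parity decision tree over `n` Boolean variables: either a leaf labelled
by a `Bool`, or an internal node querying a single variable `x i` or the
parity `x i XOR x j` of two variables, with two subtrees. -/
inductive PDTree (n : ℕ) where
  | leaf : Bool → PDTree n
  | node1 : Fin n → PDTree n → PDTree n → PDTree n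
  | node2 : Fin n → Fin n → PDTree n → PDTree n → PDTree n

namespace PDTree

/-- Evaluation of a parity decision tree on an input. -/
def eval {n : ℕ} : PDTree n → (Fin n → Bool) → Bool
  | leaf b, _ => b
  | node1 i t0 t1, x => if x i then eval t1 x else eval t0 x
  | node2 i j t0 t1, x => if xor (x i) (x j) then eval t1 x else eval t0 x

/-- The depth of a parity decision tree. -/
def depth {n : ℕ} : PDTree n → ℕ
  | leaf _ => 0
  | node1 _ t0 t1 => max (depth t0) (depth t1) + 1
  | node2 _ _ t0 t1 => max (depth t0) (depth t1) + 1

/-- A parity decision tree computes `f` if its evaluation agrees with `f`. -/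
def Computes {n : ℕ} (P : PDTree n) (f : (Fin n → Bool) → Bool) : Prop :=
  ∀ x, P.eval x = f x

end PDTree

namespace PDTree

/-- Set of variables mentioned in a parity decision tree. -/
def vars {n : ℕ} : PDTree n → Finset (Fin n)
  | leaf _ => ∅
  | node1 i t0 t1 => insert i (vars t0 ∪ vars t1)
  | node2 i j t0 t1 => insert i (insert j (vars t0 ∪ vars t1))

lemma card_vars {n : ℕ} (T : PDTree n) : T.vars.card + 2 ≤ 2 ^ (T.depth + 1) := by
  induction T with
  | leaf b => simp [vars, depth]
  | node1 i t0 t1 ih0 ih1 =>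
    have h0 : t0.vars.card + 2 ≤ 2 ^ (max t0.depth t1.depth + 1) :=
      ih0.trans (Nat.pow_le_pow_right (by norm_num) (by omega))
    have h1 : t1.vars.card + 2 ≤ 2 ^ (max t0.depth t1.depth + 1) :=
      ih1.trans (Nat.pow_le_pow_right (by norm_num) (by omega))
    have hc : (vars (node1 i t0 t1)).card ≤ 1 + (t0.vars.card + t1.vars.card) := by
      simp only [vars]
      calc (insert i (t0.vars ∪ t1.vars)).card ≤ (t0.vars ∪ t1.vars).card + 1 :=
            Finset.card_insert_le _ _
        _ ≤ t0.vars.card + t1.vars.card + 1 := by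
            exact Nat.add_le_add_right (Finset.card_union_le _ _) 1
        _ = 1 + (t0.vars.card + t1.vars.card) := by ring
    have hd : depth (node1 i t0 t1) = max t0.depth t1.depth + 1 := rfl
    rw [hd, pow_succ]
    omega
  | node2 i j t0 t1 ih0 ih1 =>
    have h0 : t0.vars.card + 2 ≤ 2 ^ (max t0.depth t1.depth + 1) :=
      ih0.trans (Nat.pow_le_pow_right (by norm_num) (by omega))
    have h1 : t1.vars.card + 2 ≤ 2 ^ (max t0.depth t1.depth + 1) :=
      ih1.trans (Nat.pow_le_pow_right (by norm_num) (by omega))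
    have hc : (vars (node2 i j t0 t1)).card ≤ 2 + (t0.vars.card + t1.vars.card) := by
      simp only [vars]
      calc (insert i (insert j (t0.vars ∪ t1.vars))).card
          ≤ (insert j (t0.vars ∪ t1.vars)).card + 1 := Finset.card_insert_le _ _
        _ ≤ (t0.vars ∪ t1.vars).card + 1 + 1 :=
            Nat.add_le_add_right (Finset.card_insert_le _ _) 1
        _ ≤ t0.vars.card + t1.vars.card + 1 + 1 := by
            have := Finset.card_union_le t0.vars t1.vars; omega
        _ = 2 + (t0.vars.card + t1.vars.card) := by ring
    have hd : depth (node2 i j t0 t1) = max t0.depth t1.depth + 1 := rfl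
    rw [hd, pow_succ]
    omega

lemma eval_congr {n : ℕ} (T : PDTree n) (x x' : Fin n → Bool)
    (h : ∀ j ∈ T.vars, x j = x' j) : T.eval x = T.eval x' := by
  induction T with
  | leaf b => rfl
  | node1 i t0 t1 ih0 ih1 =>
    have hi : x i = x' i := h i (by simp [vars])
    have h0 := ih0 fun j hj => h j (by simp [vars, hj])
    have h1 := ih1 fun j hj => h j (by simp [vars, hj])
    simp [eval, hi, h0, h1]
  | node2 i j t0 t1 ih0 ih1 =>
    have hi : x i = x' i := h i (by simp [vars])
    have hj' : x j = x' j := h j (by simp [vars])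
    have h0 := ih0 fun m hm => h m (by simp [vars, hm])
    have h1 := ih1 fun m hm => h m (by simp [vars, hm])
    simp [eval, hi, hj', h0, h1]

end PDTree

/-- for `k ≥ 2`, no Boolean function on `2^k - 1` variables, all
of whose variables are influencing, is computed by a parity decision tree of
depth `k - 1` (or less). -/
theorem stmt17 (k : ℕ) (hk : 2 ≤ k) (f : (Fin (2 ^ k - 1) → Bool) → Bool)
    (hinf : ∀ i, Influences f i)
    (P : PDTree (2 ^ k - 1)) (hdepth : P.depth ≤ k - 1) :
    ¬ P.Computes f := by
  intro hcomp
  have hcard : P.vars.card + 2 ≤ 2 ^ k := by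
    calc P.vars.card + 2 ≤ 2 ^ (P.depth + 1) := PDTree.card_vars P
      _ ≤ 2 ^ ((k - 1) + 1) := Nat.pow_le_pow_right (by norm_num) (by omega)
      _ = 2 ^ k := by congr 1; omega
  have hlt : P.vars.card < Fintype.card (Fin (2 ^ k - 1)) := by
    have h2 : 2 ≤ 2 ^ k := Nat.one_lt_two_pow (by omega)
    simp only [Fintype.card_fin]
    omega
  have hne : P.vars ≠ Finset.univ := by
    intro h
    rw [h, Finset.card_univ] at hlt
    exact lt_irrefl _ hlt
  obtain ⟨i, hi⟩ : ∃ i, i ∉ P.vars := by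
    by_contra h
    push_neg at h
    have : P.vars = Finset.univ := Finset.eq_univ_iff_forall.mpr h
    exact hne this
  obtain ⟨x, x', hagree, hne'⟩ := hinf i
  apply hne'
  rw [← hcomp x, ← hcomp x']
  exact PDTree.eval_congr P x x' fun j hj => hagree j (fun h => hi (h ▸ hj))
end
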